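/- Let d ≥ 1 and let A, B ⊆ {0,1}^d (viewed as subsets of ℤ^d). Then the sumset A + B = {a + b : a ∈ A, b ∈ B} satisfies |A + B| ≥ |A|^{(log₂ 3)/2} · |B|^{(log₂ 3)/2}. -/

import Mathlib

open scoped Pointwise

open Real Set
open scoped NNReal

noncomputable def cc : ℝ := Real.logb 2 3 / 2

lemma two_rpow_q : (2:ℝ) ^ (2 * cc) = 3 := by
  unfold cc
  rw [show 2 * (Real.logb 2 3 / 2) = Real.logb 2 3 by ring]
  exact Real.rpow_logb (by norm_num) (by norm_num) (by norm_num)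

lemma logb23_lt : Real.logb 2 3 < 2 := by
  rw [Real.logb_lt_iff_lt_rpow (by norm_num) (by norm_num)]
  rw [show (2:ℝ) = ((2:ℕ):ℝ) by norm_num, Real.rpow_natCast]
  norm_num

lemma logb23_gt : 1 < Real.logb 2 3 := by
  rw [Real.lt_logb_iff_rpow_lt (by norm_num) (by norm_num)]
  rw [Real.rpow_one]; norm_num

lemma cc_pos : (0:ℝ) < cc := by have := logb23_gt; unfold cc; linarith
lemma cc_lt_one : cc < 1 := by have := logb23_lt; unfold cc; linarith
lemma cc_half : 1/2 < cc := by have := logb23_gt; unfold cc; linarith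

lemma subadd {a b : ℝ} (ha : 0 ≤ a) (hb : 0 ≤ b) : (a+b) ^ cc ≤ a ^ cc + b ^ cc := by
  have h := NNReal.rpow_add_le_add_rpow (⟨a, ha⟩ : ℝ≥0) (⟨b, hb⟩ : ℝ≥0) cc_pos.le cc_lt_one.le
  have := (NNReal.coe_le_coe).mpr h
  push_cast [NNReal.coe_rpow] at this
  exact this

lemma cont_rpow (p : ℝ) (hp : 0 < p) : Continuous fun x : ℝ => x ^ p := by
  rw [continuous_iff_continuousAt]
  intro x
  exact Real.continuousAt_rpow_const x p (Or.inr hp.le)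

noncomputable def ff (x : ℝ) : ℝ := 1 + x ^ cc + x ^ (2*cc) - (1+x) ^ (2*cc)
noncomputable def ffd (t : ℝ) : ℝ :=
  cc * t ^ (cc-1) + (2*cc) * t ^ (2*cc-1) - 1 * (2*cc) * (1+t) ^ (2*cc-1)
noncomputable def hh (w : ℝ) : ℝ := (1/2) * w ^ cc + 1 - (1+w) ^ (2*cc-1)
noncomputable def hhd (t : ℝ) : ℝ :=
  (cc/2) * t ^ (cc-1) - (2*cc-1) * (1+t) ^ (2*cc-2)

lemma ff0 : ff 0 = 0 := by
  unfold ff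
  rw [Real.zero_rpow cc_pos.ne', Real.zero_rpow (by have := cc_pos; positivity),
    add_zero]
  norm_num

lemma ff1 : ff 1 = 0 := by
  unfold ff
  rw [Real.one_rpow, Real.one_rpow, show (1:ℝ)+1 = 2 by norm_num, two_rpow_q]
  ring

lemma hh1 : hh 1 = 0 := by
  unfold hh
  rw [Real.one_rpow, show (1:ℝ)+1 = 2 by norm_num, Real.rpow_sub (by norm_num),
    two_rpow_q, Real.rpow_one]
  ring

lemma ffcont : Continuous ff := by
  unfold ff
  have h1 := cont_rpow cc cc_pos
  have h2 := cont_rpow (2*cc) (by have := cc_pos; positivity)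
  exact ((continuous_const.add h1).add h2).sub (h2.comp (continuous_const.add continuous_id))

lemma hhcont : Continuous hh := by
  unfold hh
  have h1 := cont_rpow cc cc_pos
  have h2 := cont_rpow (2*cc-1) (by have := cc_half; linarith)
  exact ((continuous_const.mul h1).add continuous_const).sub
    (h2.comp (continuous_const.add continuous_id))

lemma ffderiv {x : ℝ} (hx : 0 < x) : HasDerivAt ff (ffd x) x := by
  have h1 : HasDerivAt (fun t : ℝ => t ^ cc) (cc * x ^ (cc-1)) x :=
    Real.hasDerivAt_rpow_const (Or.inl hx.ne')
  have h2 : HasDerivAt (fun t : ℝ => t ^ (2*cc)) ((2*cc) * x ^ (2*cc-1)) x :=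
    Real.hasDerivAt_rpow_const (Or.inl hx.ne')
  have h3 : HasDerivAt (fun t : ℝ => (1+t) ^ (2*cc)) (1 * (2*cc) * (1+x) ^ (2*cc-1)) x := by
    have hb : HasDerivAt (fun t : ℝ => 1 + t) 1 x := (hasDerivAt_id x).const_add 1
    exact hb.rpow_const (Or.inl (by positivity))
  exact (((h1.const_add 1).add h2).sub h3 : _)

lemma hhderiv {x : ℝ} (hx : 0 < x) : HasDerivAt hh (hhd x) x := by
  have h1 : HasDerivAt (fun t : ℝ => t ^ cc) (cc * x ^ (cc-1)) x :=
    Real.hasDerivAt_rpow_const (Or.inl hx.ne')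
  have h3 : HasDerivAt (fun t : ℝ => (1+t) ^ (2*cc-1)) (1 * (2*cc-1) * (1+x) ^ (2*cc-2)) x := by
    have hb : HasDerivAt (fun t : ℝ => 1 + t) 1 x := (hasDerivAt_id x).const_add 1
    have := hb.rpow_const (p := 2*cc-1) (Or.inl (by positivity : (1:ℝ)+x ≠ 0))
    convert this using 2
    ring_nf
  have h1' : HasDerivAt (fun t : ℝ => (1/2) * t ^ cc + 1) ((1/2) * (cc * x ^ (cc-1))) x :=
    (h1.const_mul (1/2)).add_const 1
  have := h1'.sub h3
  refine this.congr_deriv ?_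
  unfold hhd; ring

lemma ffd_eq {x : ℝ} (hx : 0 < x) : ffd x = (2*cc) * x ^ (2*cc-1) * hh (1/x) := by
  have e1 : x ^ (2*cc-1) * (1/x) ^ cc = x ^ (cc-1) := by
    rw [one_div, Real.inv_rpow hx.le, ← Real.rpow_neg hx.le, ← Real.rpow_add hx]
    ring_nf
  have e2 : x ^ (2*cc-1) * (1+1/x) ^ (2*cc-1) = (1+x) ^ (2*cc-1) := by
    rw [← Real.mul_rpow hx.le (by positivity)]
    congr 1
    field_simp
    ring
  unfold ffd hh
  rw [show (2*cc) * x ^ (2*cc-1) * ((1/2) * (1/x) ^ cc + 1 - (1+1/x) ^ (2*cc-1)) =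
      cc * (x ^ (2*cc-1) * (1/x) ^ cc) + (2*cc) * x ^ (2*cc-1)
        - (2*cc) * (x ^ (2*cc-1) * (1+1/x) ^ (2*cc-1)) from by ring, e1, e2]
  ring

lemma hhd_pos_log {v : ℝ} (hv : 1 < v) (h : 0 < hhd v) :
    Real.log (2*cc-1) + (2*cc-2) * Real.log (1+v) < Real.log (cc/2) + (cc-1) * Real.log v := by
  have hv0 : 0 < v := lt_trans one_pos hv
  have hv1 : (0:ℝ) < 1 + v := by linarith
  have hc2 : (0:ℝ) < 2*cc-1 := by have := cc_half; linarith
  have hcc2 : (0:ℝ) < cc/2 := by have := cc_pos; linarith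
  have hlt : (2*cc-1) * (1+v) ^ (2*cc-2) < (cc/2) * v ^ (cc-1) := by
    unfold hhd at h; linarith
  have hB : (0:ℝ) < (2*cc-1) * (1+v) ^ (2*cc-2) :=
    mul_pos hc2 (Real.rpow_pos_of_pos hv1 _)
  have hlog := Real.log_lt_log hB hlt
  rw [Real.log_mul hc2.ne' (Real.rpow_pos_of_pos hv1 _).ne',
    Real.log_mul hcc2.ne' (Real.rpow_pos_of_pos hv0 _).ne',
    Real.log_rpow hv1, Real.log_rpow hv0] at hlog
  linarith

lemma hhd_neg_log {v : ℝ} (hv : 1 < v) (h : hhd v < 0) :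
    Real.log (cc/2) + (cc-1) * Real.log v < Real.log (2*cc-1) + (2*cc-2) * Real.log (1+v) := by
  have hv0 : 0 < v := lt_trans one_pos hv
  have hv1 : (0:ℝ) < 1 + v := by linarith
  have hc2 : (0:ℝ) < 2*cc-1 := by have := cc_half; linarith
  have hcc2 : (0:ℝ) < cc/2 := by have := cc_pos; linarith
  have hlt : (cc/2) * v ^ (cc-1) < (2*cc-1) * (1+v) ^ (2*cc-2) := by
    unfold hhd at h; linarith
  have hA : (0:ℝ) < (cc/2) * v ^ (cc-1) :=
    mul_pos hcc2 (Real.rpow_pos_of_pos hv0 _)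
  have hlog := Real.log_lt_log hA hlt
  rw [Real.log_mul hc2.ne' (Real.rpow_pos_of_pos hv1 _).ne',
    Real.log_mul hcc2.ne' (Real.rpow_pos_of_pos hv0 _).ne',
    Real.log_rpow hv1, Real.log_rpow hv0] at hlog
  linarith

lemma ratio_mono {u v : ℝ} (hu : 1 ≤ u) (huv : u < v) :
    (cc-1) * Real.log u + (2-2*cc) * Real.log (1+u) <
      (cc-1) * Real.log v + (2-2*cc) * Real.log (1+v) := by
  have hu0 : 0 < u := lt_of_lt_of_le one_pos hu
  have hv0 : 0 < v := lt_trans hu0 huv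
  have hkey : (1+u)^2 / u < (1+v)^2 / v := by
    rw [div_lt_div_iff₀ hu0 hv0]
    have huv1 : 1 < u * v := by nlinarith
    nlinarith [mul_pos (sub_pos.mpr huv) (sub_pos.mpr huv1)]
  have hlog := Real.log_lt_log (by positivity) hkey
  rw [Real.log_div (by positivity) hu0.ne', Real.log_div (by positivity) hv0.ne',
    Real.log_pow, Real.log_pow] at hlog
  push_cast at hlog
  have h1 : (0:ℝ) < 1 - cc := by have := cc_lt_one; linarith
  nlinarith [mul_pos h1 (sub_pos.mpr hlog)]

lemma star_aux {x : ℝ} (hx0 : 0 ≤ x) (hx1 : x ≤ 1) : 0 ≤ ff x := by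
  by_contra hneg
  push_neg at hneg
  have hx : 0 < x := by
    rcases eq_or_lt_of_le hx0 with h | h
    · exfalso; rw [← h, ff0] at hneg; exact lt_irrefl 0 hneg
    · exact h
  have hxlt : x < 1 := by
    rcases eq_or_lt_of_le hx1 with h | h
    · exfalso; rw [h, ff1] at hneg; exact lt_irrefl 0 hneg
    · exact h
  obtain ⟨z₁, hz₁, hslope₁⟩ := exists_hasDerivAt_eq_slope ff ffd hx ffcont.continuousOn
    (fun t ht => ffderiv ht.1)
  obtain ⟨z₂, hz₂, hslope₂⟩ := exists_hasDerivAt_eq_slope ff ffd hxlt ffcont.continuousOn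
    (fun t ht => ffderiv (lt_trans hx ht.1))
  have hf1 : ffd z₁ < 0 := by
    rw [hslope₁, ff0, sub_zero, sub_zero]
    exact div_neg_of_neg_of_pos hneg hx
  have hf2 : 0 < ffd z₂ := by
    rw [hslope₂, ff1, zero_sub]
    have hden : 0 < 1 - x := by linarith
    exact div_pos (by linarith) hden
  have hz₁0 : 0 < z₁ := hz₁.1
  have hz₂0 : 0 < z₂ := lt_trans hx hz₂.1
  have hww : 1/z₂ < 1/z₁ := by
    apply one_div_lt_one_div_of_lt hz₁0 (lt_trans hz₁.2 hz₂.1)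
  have hw₂1 : 1 < 1/z₂ := one_lt_one_div hz₂0 hz₂.2
  have hfac₁ : (0:ℝ) < (2*cc) * z₁ ^ (2*cc-1) := by
    have := cc_pos
    have := Real.rpow_pos_of_pos hz₁0 (2*cc-1)
    positivity
  have hfac₂ : (0:ℝ) < (2*cc) * z₂ ^ (2*cc-1) := by
    have := cc_pos
    have := Real.rpow_pos_of_pos hz₂0 (2*cc-1)
    positivity
  have hh₁neg : hh (1/z₁) < 0 := by
    by_contra hge
    push_neg at hge
    have : 0 ≤ ffd z₁ := by rw [ffd_eq hz₁0]; exact mul_nonneg hfac₁.le hge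
    linarith
  have hh₂pos : 0 < hh (1/z₂) := by
    by_contra hle
    push_neg at hle
    have : ffd z₂ ≤ 0 := by rw [ffd_eq hz₂0]; exact mul_nonpos_of_nonneg_of_nonpos hfac₂.le hle
    linarith
  obtain ⟨v₁, hv₁, hs₁⟩ := exists_hasDerivAt_eq_slope hh hhd hw₂1 hhcont.continuousOn
    (fun t ht => hhderiv (lt_trans one_pos ht.1))
  obtain ⟨v₂, hv₂, hs₂⟩ := exists_hasDerivAt_eq_slope hh hhd hww hhcont.continuousOn
    (fun t ht => hhderiv (lt_trans (lt_trans one_pos hw₂1) ht.1))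
  have hd₁ : 0 < hhd v₁ := by
    rw [hs₁, hh1, sub_zero]
    exact div_pos hh₂pos (by linarith [hv₁.1, hv₁.2])
  have hd₂ : hhd v₂ < 0 := by
    rw [hs₂]
    exact div_neg_of_neg_of_pos (by linarith) (by linarith [hv₂.1, hv₂.2])
  have hv₁1 : 1 < v₁ := hv₁.1
  have hv₂1 : 1 < v₂ := lt_trans hw₂1 hv₂.1
  have hltv : v₁ < v₂ := lt_trans hv₁.2 hv₂.1
  have P₁ := hhd_pos_log hv₁1 hd₁
  have P₂ := hhd_neg_log hv₂1 hd₂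
  have M := ratio_mono hv₁1.le hltv
  nlinarith [P₁, P₂, M]

lemma star_all {x : ℝ} (hx : 0 < x) : (1+x) ^ (2*cc) ≤ 1 + x ^ cc + x ^ (2*cc) := by
  rcases le_or_gt x 1 with h | h
  · have := star_aux hx.le h
    unfold ff at this
    linarith
  · have hinv0 : 0 < 1/x := by positivity
    have hinv1 : 1/x ≤ 1 := by
      rw [div_le_one hx]; linarith
    have hs := star_aux hinv0.le hinv1
    unfold ff at hs
    -- multiply by x ^ (2*cc)
    have hxq : (0:ℝ) < x ^ (2*cc) := Real.rpow_pos_of_pos hx _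
    have e0 : x ^ (2*cc) * (1+1/x) ^ (2*cc) = (1+x) ^ (2*cc) := by
      rw [← Real.mul_rpow hx.le (by positivity)]
      congr 1
      field_simp
      ring
    have e1 : x ^ (2*cc) * (1/x) ^ cc = x ^ cc := by
      rw [one_div, Real.inv_rpow hx.le, ← Real.rpow_neg hx.le, ← Real.rpow_add hx]
      ring_nf
    have e2 : x ^ (2*cc) * (1/x) ^ (2*cc) = 1 := by
      rw [← Real.mul_rpow hx.le (by positivity)]
      rw [mul_one_div, div_self hx.ne', Real.one_rpow]
    have := mul_le_mul_of_nonneg_left (by linarith : (1+1/x) ^ (2*cc) ≤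
        1 + (1/x) ^ cc + (1/x) ^ (2*cc)) hxq.le
    rw [mul_add, mul_add, mul_one, e0, e1, e2] at this
    linarith

lemma bnd {x : ℝ} (hx : 0 < x) :
    (1+x) ^ cc * (1+1/x) ^ cc ≤ 1 + x ^ cc + (1/x) ^ cc := by
  have hxc : (0:ℝ) < x ^ cc := Real.rpow_pos_of_pos hx _
  rw [← mul_le_mul_iff_right₀ hxc]
  have e1 : x ^ cc * ((1+x) ^ cc * (1+1/x) ^ cc) = (1+x) ^ (2*cc) := by
    rw [mul_comm ((1+x) ^ cc), ← mul_assoc, ← Real.mul_rpow hx.le (by positivity)]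
    rw [show x * (1+1/x) = 1 + x from by field_simp; ring]
    rw [← Real.rpow_add (by positivity : (0:ℝ) < 1+x)]
    ring_nf
  have e2 : x ^ cc * (1/x) ^ cc = 1 := by
    rw [← Real.mul_rpow hx.le (by positivity), mul_one_div, div_self hx.ne', Real.one_rpow]
  have e3 : x ^ cc * x ^ cc = x ^ (2*cc) := by
    rw [← Real.rpow_add hx]; ring_nf
  rw [e1, mul_add, mul_add, mul_one, e2, e3]
  have := star_all hx
  linarith

noncomputable def gg (C K t : ℝ) : ℝ := C + t ^ cc - K * (1+t) ^ cc
noncomputable def ggd (K t : ℝ) : ℝ := cc * t ^ (cc-1) - K * (cc * (1+t) ^ (cc-1))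

lemma ggcont (C K : ℝ) : Continuous (gg C K) := by
  unfold gg
  have h1 := cont_rpow cc cc_pos
  exact (continuous_const.add h1).sub
    (continuous_const.mul (h1.comp (continuous_const.add continuous_id)))

lemma ggderiv (C K : ℝ) {t : ℝ} (ht : 0 < t) : HasDerivAt (gg C K) (ggd K t) t := by
  have h1 : HasDerivAt (fun s : ℝ => s ^ cc) (cc * t ^ (cc-1)) t :=
    Real.hasDerivAt_rpow_const (Or.inl ht.ne')
  have h3 : HasDerivAt (fun s : ℝ => (1+s) ^ cc) (1 * cc * (1+t) ^ (cc-1)) t := by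
    have hb : HasDerivAt (fun s : ℝ => 1 + s) 1 t := (hasDerivAt_id t).const_add 1
    exact hb.rpow_const (Or.inl (by positivity))
  have := (h1.const_add C).sub (h3.const_mul K)
  refine this.congr_deriv ?_
  unfold ggd; ring

lemma ggd_pos_log {K v : ℝ} (hK : 0 < K) (hv : 0 < v) (h : 0 < ggd K v) :
    Real.log K < (1-cc) * (Real.log (1+v) - Real.log v) := by
  have hv1 : (0:ℝ) < 1 + v := by linarith
  have hlt : K * (cc * (1+v) ^ (cc-1)) < cc * v ^ (cc-1) := by unfold ggd at h; linarith
  have hB : (0:ℝ) < K * (cc * (1+v) ^ (cc-1)) :=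
    mul_pos hK (mul_pos cc_pos (Real.rpow_pos_of_pos hv1 _))
  have hlog := Real.log_lt_log hB hlt
  rw [Real.log_mul hK.ne' (mul_pos cc_pos (Real.rpow_pos_of_pos hv1 _)).ne',
    Real.log_mul cc_pos.ne' (Real.rpow_pos_of_pos hv1 _).ne',
    Real.log_mul cc_pos.ne' (Real.rpow_pos_of_pos hv _).ne',
    Real.log_rpow hv1, Real.log_rpow hv] at hlog
  nlinarith

lemma ggd_neg_log {K v : ℝ} (hK : 0 < K) (hv : 0 < v) (h : ggd K v < 0) :
    (1-cc) * (Real.log (1+v) - Real.log v) < Real.log K := by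
  have hv1 : (0:ℝ) < 1 + v := by linarith
  have hlt : cc * v ^ (cc-1) < K * (cc * (1+v) ^ (cc-1)) := by unfold ggd at h; linarith
  have hA : (0:ℝ) < cc * v ^ (cc-1) := mul_pos cc_pos (Real.rpow_pos_of_pos hv _)
  have hlog := Real.log_lt_log hA hlt
  rw [Real.log_mul hK.ne' (mul_pos cc_pos (Real.rpow_pos_of_pos hv1 _)).ne',
    Real.log_mul cc_pos.ne' (Real.rpow_pos_of_pos hv1 _).ne',
    Real.log_mul cc_pos.ne' (Real.rpow_pos_of_pos hv _).ne',
    Real.log_rpow hv1, Real.log_rpow hv] at hlog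
  nlinarith

lemma ratio_anti {u v : ℝ} (hu : 0 < u) (huv : u < v) :
    Real.log (1+v) - Real.log v < Real.log (1+u) - Real.log u := by
  have hv0 : 0 < v := lt_trans hu huv
  have hkey : (1+v) / v < (1+u) / u := by
    rw [div_lt_div_iff₀ hv0 hu]
    nlinarith
  have hlog := Real.log_lt_log (by positivity) hkey
  rw [Real.log_div (by positivity) hu.ne', Real.log_div (by positivity) hv0.ne'] at hlog
  linarith

lemma one_add_rpow_le {x : ℝ} (hx : 0 ≤ x) : (1+x) ^ cc ≤ 1 + x ^ cc := by
  have h := subadd zero_le_one hx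
  rwa [Real.one_rpow] at h

lemma lem2 {x y : ℝ} (hx : 0 ≤ x) (hy : 0 ≤ y) (hxy : x * y ≤ 1) :
    (1+x) ^ cc * (1+y) ^ cc ≤ 1 + x ^ cc + y ^ cc := by
  rcases eq_or_lt_of_le hx with hx0 | hx0
  · rw [← hx0, add_zero, Real.one_rpow, one_mul, Real.zero_rpow cc_pos.ne']
    have h := one_add_rpow_le hy
    linarith
  rcases eq_or_lt_of_le hy with hy0 | hy0
  · rw [← hy0, add_zero, Real.one_rpow, mul_one, Real.zero_rpow cc_pos.ne']
    have h := one_add_rpow_le hx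
    linarith
  set C := 1 + x ^ cc with hC
  set K := (1+x) ^ cc with hKdef
  have hK : 0 < K := Real.rpow_pos_of_pos (by linarith) _
  have hgoal : 0 ≤ gg C K y → (1+x) ^ cc * (1+y) ^ cc ≤ 1 + x ^ cc + y ^ cc := by
    intro h; unfold gg at h; rw [← hC, ← hKdef]; linarith
  apply hgoal
  by_contra hneg
  push_neg at hneg
  have hb : 0 ≤ gg C K (1/x) := by
    have := bnd hx0
    unfold gg; rw [hC, hKdef]; linarith
  have h0 : 0 ≤ gg C K 0 := by
    unfold gg
    rw [Real.zero_rpow cc_pos.ne', add_zero, show (1:ℝ)+0 = 1 by norm_num,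
      Real.one_rpow, mul_one, hC, hKdef]
    have h := one_add_rpow_le hx
    linarith
  have hy1x : y ≤ 1/x := by
    rw [le_div_iff₀ hx0]
    linarith [mul_comm x y]
  rcases eq_or_lt_of_le hy1x with heq | hlt
  · rw [heq] at hneg; linarith
  obtain ⟨u, hu, hsu⟩ := exists_hasDerivAt_eq_slope (gg C K) (ggd K) hy0
    (ggcont C K).continuousOn (fun t ht => ggderiv C K ht.1)
  obtain ⟨v, hv, hsv⟩ := exists_hasDerivAt_eq_slope (gg C K) (ggd K) hlt
    (ggcont C K).continuousOn (fun t ht => ggderiv C K (lt_trans hy0 ht.1))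
  have hdu : ggd K u < 0 := by
    rw [hsu, sub_zero]
    exact div_neg_of_neg_of_pos (by linarith) hy0
  have hdv : 0 < ggd K v := by
    rw [hsv]
    exact div_pos (by linarith) (by linarith [hv.1, hv.2])
  have hu0 : 0 < u := hu.1
  have hv0 : 0 < v := lt_trans hy0 hv.1
  have huv : u < v := lt_trans hu.2 hv.1
  have A := ggd_neg_log hK hu0 hdu
  have B := ggd_pos_log hK hv0 hdv
  have anti := ratio_anti hu0 huv
  have h1cc : (0:ℝ) < 1 - cc := by have := cc_lt_one; linarith
  nlinarith [mul_lt_mul_of_pos_left anti h1cc]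

lemma key1 {a0 a1 b0 b1 : ℝ} (ha0 : 0 ≤ a0) (ha1 : 0 ≤ a1) (hb0 : 0 ≤ b0) (hb1 : 0 ≤ b1)
    (hord : a1 * b0 ≤ a0 * b1) :
    (a0+a1) ^ cc * (b0+b1) ^ cc ≤
      a0 ^ cc * b0 ^ cc + a0 ^ cc * b1 ^ cc + a1 ^ cc * b1 ^ cc := by
  have hR : ∀ u v : ℝ, 0 ≤ u → 0 ≤ v → 0 ≤ u ^ cc * v ^ cc := fun u v hu hv =>
    mul_nonneg (Real.rpow_nonneg hu _) (Real.rpow_nonneg hv _)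
  rcases eq_or_lt_of_le ha0 with ha0' | ha0'
  · -- a0 = 0, so a1 * b0 = 0
    have h0 : a1 * b0 = 0 := le_antisymm (by rw [← ha0'] at hord; simpa using hord)
      (mul_nonneg ha1 hb0)
    rcases mul_eq_zero.mp h0 with h | h
    all_goals rw [← ha0', h]
    all_goals simp only [Real.zero_rpow cc_pos.ne', zero_add, add_zero, zero_mul, mul_zero]
    all_goals first
      | rfl
      | positivity
      | linarith [hR a1 b1 ha1 hb1, hR a0 b0 ha0 hb0, hR a0 b1 ha0 hb1, hR a1 b0 ha1 hb0]
  rcases eq_or_lt_of_le hb1 with hb1' | hb1'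
  · -- b1 = 0, so a1 * b0 = 0
    have h0 : a1 * b0 = 0 := le_antisymm (by rw [← hb1'] at hord; simpa using hord)
      (mul_nonneg ha1 hb0)
    rcases mul_eq_zero.mp h0 with h | h
    all_goals rw [← hb1', h]
    all_goals simp only [Real.zero_rpow cc_pos.ne', zero_add, add_zero, zero_mul, mul_zero]
    all_goals first
      | rfl
      | positivity
      | linarith [hR a1 b1 ha1 hb1, hR a0 b0 ha0 hb0, hR a0 b1 ha0 hb1, hR a1 b0 ha1 hb0]
  · -- main case a0 > 0, b1 > 0
    set x := a1 / a0 with hxdef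
    set y := b0 / b1 with hydef
    have hxnn : 0 ≤ x := div_nonneg ha1 ha0'.le
    have hynn : 0 ≤ y := div_nonneg hb0 hb1'.le
    have hxy : x * y ≤ 1 := by
      rw [hxdef, hydef, div_mul_div_comm, div_le_one (by positivity)]
      nlinarith
    have h := lem2 hxnn hynn hxy
    have hfac : (0:ℝ) < a0 ^ cc * b1 ^ cc :=
      mul_pos (Real.rpow_pos_of_pos ha0' _) (Real.rpow_pos_of_pos hb1' _)
    have h2 := mul_le_mul_of_nonneg_left h hfac.le
    have e1 : a0 ^ cc * (1+x) ^ cc = (a0+a1) ^ cc := by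
      rw [← Real.mul_rpow ha0'.le (by positivity)]
      congr 1
      rw [hxdef]
      field_simp
    have e2 : b1 ^ cc * (1+y) ^ cc = (b0+b1) ^ cc := by
      rw [← Real.mul_rpow hb1'.le (by positivity)]
      congr 1
      rw [hydef]
      field_simp
      ring
    have e3 : a0 ^ cc * x ^ cc = a1 ^ cc := by
      rw [← Real.mul_rpow ha0'.le hxnn]
      congr 1
      rw [hxdef]
      field_simp
    have e4 : b1 ^ cc * y ^ cc = b0 ^ cc := by
      rw [← Real.mul_rpow hb1'.le hynn]
      congr 1
      rw [hydef]
      field_simp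
    calc (a0+a1) ^ cc * (b0+b1) ^ cc
        = (a0 ^ cc * b1 ^ cc) * ((1+x) ^ cc * (1+y) ^ cc) := by
          rw [← e1, ← e2]; ring
      _ ≤ (a0 ^ cc * b1 ^ cc) * (1 + x ^ cc + y ^ cc) := h2
      _ = a0 ^ cc * b0 ^ cc + a0 ^ cc * b1 ^ cc + a1 ^ cc * b1 ^ cc := by
          rw [mul_add, mul_add, mul_one,
            show a0 ^ cc * b1 ^ cc * x ^ cc = (a0 ^ cc * x ^ cc) * b1 ^ cc from by ring,
            show a0 ^ cc * b1 ^ cc * y ^ cc = a0 ^ cc * (b1 ^ cc * y ^ cc) from by ring,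
            e3, e4]
          ring

lemma key {a0 a1 b0 b1 : ℝ} (ha0 : 0 ≤ a0) (ha1 : 0 ≤ a1) (hb0 : 0 ≤ b0) (hb1 : 0 ≤ b1) :
    (a0+a1) ^ cc * (b0+b1) ^ cc ≤
      a0 ^ cc * b0 ^ cc + a1 ^ cc * b1 ^ cc + max (a0 ^ cc * b1 ^ cc) (a1 ^ cc * b0 ^ cc) := by
  rcases le_total (a1 * b0) (a0 * b1) with h | h
  · have := key1 ha0 ha1 hb0 hb1 h
    have hm : a0 ^ cc * b1 ^ cc ≤ max (a0 ^ cc * b1 ^ cc) (a1 ^ cc * b0 ^ cc) := le_max_left _ _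
    linarith
  · have := key1 ha1 ha0 hb1 hb0 (by linarith [mul_comm a0 b1, mul_comm a1 b0])
    rw [add_comm a1 a0, add_comm b1 b0] at this
    have hm : a1 ^ cc * b0 ^ cc ≤ max (a0 ^ cc * b1 ^ cc) (a1 ^ cc * b0 ^ cc) := le_max_right _ _
    linarith

section Slices

open Finset
open scoped Pointwise

variable {d : ℕ}

noncomputable def sl (d : ℕ) (k : ℤ) (S : Finset (Fin (d+1) → ℤ)) : Finset (Fin d → ℤ) :=
  (S.filter fun v => v (Fin.last d) = k).image Fin.init

lemma sl_card (k : ℤ) (S : Finset (Fin (d+1) → ℤ)) :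
    (sl d k S).card = (S.filter fun v => v (Fin.last d) = k).card := by
  apply Finset.card_image_of_injOn
  intro a ha b hb hab
  simp only [Finset.coe_filter, Set.mem_setOf_eq] at ha hb
  rw [← Fin.snoc_init_self a, ← Fin.snoc_init_self b, hab, ha.2, hb.2]

lemma mem_sl {k : ℤ} {S : Finset (Fin (d+1) → ℤ)} {u : Fin d → ℤ} :
    u ∈ sl d k S ↔ ∃ a ∈ S, a (Fin.last d) = k ∧ Fin.init a = u := by
  unfold sl
  simp only [Finset.mem_image, Finset.mem_filter]
  constructor
  · rintro ⟨a, ⟨ha, hk⟩, rfl⟩; exact ⟨a, ha, hk, rfl⟩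
  · rintro ⟨a, ha, hk, rfl⟩; exact ⟨a, ⟨ha, hk⟩, rfl⟩

lemma init_add (a b : Fin (d+1) → ℤ) : Fin.init (a+b) = Fin.init a + Fin.init b := rfl

lemma sl_add_subset (j k : ℤ) (A B : Finset (Fin (d+1) → ℤ)) :
    sl d j A + sl d k B ⊆ sl d (j+k) (A + B) := by
  intro s hs
  rw [Finset.mem_add] at hs
  obtain ⟨u, hu, v, hv, rfl⟩ := hs
  obtain ⟨a, ha, hak, hau⟩ := mem_sl.mp hu
  obtain ⟨b, hb, hbk, hbv⟩ := mem_sl.mp hv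
  refine mem_sl.mpr ⟨a + b, Finset.add_mem_add ha hb, ?_, ?_⟩
  · show a (Fin.last d) + b (Fin.last d) = j + k
    rw [hak, hbk]
  · rw [init_add, hau, hbv]

lemma card_split (A : Finset (Fin (d+1) → ℤ)) (hA : ∀ a ∈ A, ∀ i, a i = 0 ∨ a i = 1) :
    A.card = (sl d 0 A).card + (sl d 1 A).card := by
  rw [sl_card, sl_card]
  rw [show A.filter (fun v => v (Fin.last d) = 1)
      = A.filter (fun v => ¬ v (Fin.last d) = 0) from Finset.filter_congr fun a ha => by
    rcases hA a ha (Fin.last d) with h | h <;> simp [h]]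
  exact (Finset.card_filter_add_card_filter_not _).symm

lemma three_slices (S : Finset (Fin (d+1) → ℤ)) :
    (S.filter fun v => v (Fin.last d) = 0).card + (S.filter fun v => v (Fin.last d) = 1).card
      + (S.filter fun v => v (Fin.last d) = 2).card ≤ S.card := by
  have hd01 : Disjoint (S.filter fun v => v (Fin.last d) = 0)
      (S.filter fun v => v (Fin.last d) = 1) := by
    apply Finset.disjoint_left.mpr
    intro x hx hx'
    simp only [Finset.mem_filter] at hx hx'
    omega
  have hd012 : Disjoint ((S.filter fun v => v (Fin.last d) = 0) ∪
      (S.filter fun v => v (Fin.last d) = 1)) (S.filter fun v => v (Fin.last d) = 2) := by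
    apply Finset.disjoint_left.mpr
    intro x hx hx'
    simp only [Finset.mem_union, Finset.mem_filter] at hx hx'
    omega
  calc (S.filter fun v => v (Fin.last d) = 0).card + (S.filter fun v => v (Fin.last d) = 1).card
        + (S.filter fun v => v (Fin.last d) = 2).card
      = ((S.filter fun v => v (Fin.last d) = 0) ∪ (S.filter fun v => v (Fin.last d) = 1)
          ∪ (S.filter fun v => v (Fin.last d) = 2)).card := by
        rw [Finset.card_union_of_disjoint hd012, Finset.card_union_of_disjoint hd01]
    _ ≤ S.card := Finset.card_le_card (by
        intro x hx
        simp only [Finset.mem_union, Finset.mem_filter] at hx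
        tauto)

lemma sl_cube {k : ℤ} {A : Finset (Fin (d+1) → ℤ)} (hA : ∀ a ∈ A, ∀ i, a i = 0 ∨ a i = 1) :
    ∀ u ∈ sl d k A, ∀ i, u i = 0 ∨ u i = 1 := by
  intro u hu i
  obtain ⟨a, ha, _, rfl⟩ := mem_sl.mp hu
  exact hA a ha _

end Slices

open scoped Pointwise in
theorem aux_cube : ∀ (d : ℕ) (A B : Finset (Fin d → ℤ)),
    (∀ a ∈ A, ∀ i, a i = 0 ∨ a i = 1) → (∀ b ∈ B, ∀ i, b i = 0 ∨ b i = 1) →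
    (A.card : ℝ) ^ cc * (B.card : ℝ) ^ cc ≤ ((A + B).card : ℝ) := by
  intro d
  induction d with
  | zero =>
    intro A B _ _
    rcases A.eq_empty_or_nonempty with rfl | hAne
    · simp [Real.zero_rpow cc_pos.ne']
    rcases B.eq_empty_or_nonempty with rfl | hBne
    · simp [Real.zero_rpow cc_pos.ne']
    have hsub : ∀ (u v : Fin 0 → ℤ), u = v := fun u v => funext fun i => i.elim0
    have hA1 : A.card = 1 :=
      le_antisymm (Finset.card_le_one.mpr fun a _ b _ => hsub a b) hAne.card_pos
    have hB1 : B.card = 1 :=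
      le_antisymm (Finset.card_le_one.mpr fun a _ b _ => hsub a b) hBne.card_pos
    have hABne : (A + B).Nonempty := hAne.add hBne
    have : (1:ℝ) ≤ ((A+B).card : ℝ) := by exact_mod_cast hABne.card_pos
    rw [hA1, hB1]
    push_cast
    rw [Real.one_rpow]
    linarith
  | succ d ih =>
    intro A B hA hB
    have h00 := ih (sl d 0 A) (sl d 0 B) (sl_cube hA) (sl_cube hB)
    have h01 := ih (sl d 0 A) (sl d 1 B) (sl_cube hA) (sl_cube hB)
    have h10 := ih (sl d 1 A) (sl d 0 B) (sl_cube hA) (sl_cube hB)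
    have h11 := ih (sl d 1 A) (sl d 1 B) (sl_cube hA) (sl_cube hB)
    have bound : ∀ (j k m : ℤ), j + k = m → ((sl d j A + sl d k B).card : ℝ)
        ≤ (((A+B).filter fun v => v (Fin.last d) = m).card : ℝ) := by
      intro j k m hm
      subst hm
      have h1 := Finset.card_le_card (sl_add_subset j k A B)
      rw [sl_card] at h1
      exact_mod_cast h1
    have hcard : (((A+B).filter fun v => v (Fin.last d) = 0).card : ℝ)
        + (((A+B).filter fun v => v (Fin.last d) = 1).card : ℝ)
        + (((A+B).filter fun v => v (Fin.last d) = 2).card : ℝ) ≤ ((A+B).card : ℝ) := by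
      exact_mod_cast three_slices (A+B)
    have hAc : (A.card : ℝ) = ((sl d 0 A).card : ℝ) + ((sl d 1 A).card : ℝ) := by
      exact_mod_cast congrArg (Nat.cast (R := ℝ)) (card_split A hA)
    have hBc : (B.card : ℝ) = ((sl d 0 B).card : ℝ) + ((sl d 1 B).card : ℝ) := by
      exact_mod_cast congrArg (Nat.cast (R := ℝ)) (card_split B hB)
    rw [hAc, hBc]
    have hkey := key (Nat.cast_nonneg (sl d 0 A).card) (Nat.cast_nonneg (sl d 1 A).card)
      (Nat.cast_nonneg (sl d 0 B).card) (Nat.cast_nonneg (sl d 1 B).card)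
    refine hkey.trans ?_
    have m0 := h00.trans (bound 0 0 0 (by norm_num))
    have m2 := h11.trans (bound 1 1 2 (by norm_num))
    have m1 : max (((sl d 0 A).card : ℝ) ^ cc * ((sl d 1 B).card : ℝ) ^ cc)
        (((sl d 1 A).card : ℝ) ^ cc * ((sl d 0 B).card : ℝ) ^ cc)
        ≤ (((A+B).filter fun v => v (Fin.last d) = 1).card : ℝ) :=
      max_le (h01.trans (bound 0 1 1 (by norm_num))) (h10.trans (bound 1 0 1 (by norm_num)))
    linarith

open scoped Pointwise in
theorem brunn_minkowski_hypercube (d : ℕ) (hd : 1 ≤ d)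
    (A B : Finset (Fin d → ℤ))
    (hA : ∀ a ∈ A, ∀ i, a i = 0 ∨ a i = 1)
    (hB : ∀ b ∈ B, ∀ i, b i = 0 ∨ b i = 1) :
    (A.card : ℝ) ^ (Real.logb 2 3 / 2) * (B.card : ℝ) ^ (Real.logb 2 3 / 2) ≤
      ((A + B).card : ℝ) := by
  have h := aux_cube d A B hA hB
  unfold cc at h
  exact h
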